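/- arXiv:2103.02599 — 8 statements merged into one kernel-verified Lean document; each statement's English description precedes it below -/
import Mathlib

section
/- Let q be a positive integer and let B = {(0,0), (3q,0), (0,3q), (-3q,0), (0,-3q)} ⊂ ℝ². Then for every z ∈ ℝ² there exists b ∈ B such that either ‖z − b‖₂ ≤ 6q or ‖z − b‖₂ ≤ ‖z‖₂ − q. -/
lemma norm_sub_eq2 (z : EuclideanSpace ℝ (Fin 2)) (a b : ℝ) :
    ‖z - (WithLp.equiv 2 (Fin 2 → ℝ)).symm ![a, b]‖ =
      Real.sqrt ((z 0 - a)^2 + (z 1 - b)^2) := by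
  rw [EuclideanSpace.norm_eq]
  congr 1
  simp [Fin.sum_univ_two, Real.norm_eq_abs, sq_abs]

lemma key2 (x y N c : ℝ) (hN : N^2 = x^2+y^2) (hN0 : 0 ≤ N) (h6 : 6*c < N)
    (hdom : y^2 ≤ x^2) (hx : 0 ≤ x) (hc : 0 < c) :
    (x - 3*c)^2 + y^2 ≤ (N - c)^2 := by
  nlinarith [mul_pos hc hc, sq_nonneg (3*x - N - 4*c), mul_nonneg hx hN0,
    mul_nonneg (mul_nonneg hx hx) hc.le, mul_pos hc (lt_of_le_of_lt (by linarith) h6)]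

theorem stmt_0 (q : ℕ) (hq : 0 < q) (z : EuclideanSpace ℝ (Fin 2)) :
    ∃ b ∈ ({(WithLp.equiv 2 (Fin 2 → ℝ)).symm ![0, 0],
            (WithLp.equiv 2 (Fin 2 → ℝ)).symm ![3 * (q : ℝ), 0],
            (WithLp.equiv 2 (Fin 2 → ℝ)).symm ![0, 3 * (q : ℝ)],
            (WithLp.equiv 2 (Fin 2 → ℝ)).symm ![-(3 * (q : ℝ)), 0],
            (WithLp.equiv 2 (Fin 2 → ℝ)).symm ![0, -(3 * (q : ℝ))]} :
          Set (EuclideanSpace ℝ (Fin 2))),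
      ‖z - b‖ ≤ 6 * (q : ℝ) ∨ ‖z - b‖ ≤ ‖z‖ - (q : ℝ) := by
  set x := z 0 with hx
  set y := z 1 with hy
  have hq' : (0:ℝ) < q := by exact_mod_cast hq
  have hnz : ‖z‖ = Real.sqrt (x^2 + y^2) := by
    rw [EuclideanSpace.norm_eq]
    congr 1
    simp [Fin.sum_univ_two, Real.norm_eq_abs, sq_abs, hx, hy]
  have hN0 : (0:ℝ) ≤ ‖z‖ := norm_nonneg z
  have hNsq : ‖z‖^2 = x^2 + y^2 := by
    rw [hnz]; exact Real.sq_sqrt (by positivity)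
  by_cases h : ‖z‖ ≤ 6 * q
  · refine ⟨_, Set.mem_insert _ _, Or.inl ?_⟩
    rw [norm_sub_eq2]
    simpa [hnz, hx, hy] using h
  · push_neg at h
    have hNq : (0:ℝ) ≤ ‖z‖ - q := by linarith
    rcases le_total (y^2) (x^2) with hdom | hdom
    · rcases le_total 0 x with hxs | hxs
      · refine ⟨_, Set.mem_insert_iff.mpr (Or.inr (Set.mem_insert _ _)), Or.inr ?_⟩
        rw [norm_sub_eq2]
        have := key2 x y ‖z‖ q hNsq hN0 (by linarith) hdom hxs hq'
        calc Real.sqrt ((x - 3*(q:ℝ))^2 + (y - 0)^2)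
            ≤ Real.sqrt ((‖z‖ - q)^2) := by
              apply Real.sqrt_le_sqrt; rw [sub_zero]; linarith [this]
          _ = ‖z‖ - q := Real.sqrt_sq hNq
      · refine ⟨(WithLp.equiv 2 (Fin 2 → ℝ)).symm ![-(3*(q:ℝ)), 0], by simp, Or.inr ?_⟩
        rw [norm_sub_eq2]
        have := key2 (-x) y ‖z‖ q (by rw [hNsq]; ring) hN0 (by linarith)
          (by simpa using hdom) (by linarith) hq'
        calc Real.sqrt ((x - -(3*(q:ℝ)))^2 + (y - 0)^2)
            ≤ Real.sqrt ((‖z‖ - q)^2) := by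
              apply Real.sqrt_le_sqrt; nlinarith [this]
          _ = ‖z‖ - q := Real.sqrt_sq hNq
    · rcases le_total 0 y with hys | hys
      · refine ⟨(WithLp.equiv 2 (Fin 2 → ℝ)).symm ![0, 3*(q:ℝ)], by simp, Or.inr ?_⟩
        rw [norm_sub_eq2]
        have := key2 y x ‖z‖ q (by rw [hNsq]; ring) hN0 (by linarith) hdom hys hq'
        calc Real.sqrt ((x - 0)^2 + (y - 3*(q:ℝ))^2)
            ≤ Real.sqrt ((‖z‖ - q)^2) := by
              apply Real.sqrt_le_sqrt; nlinarith [this]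
          _ = ‖z‖ - q := Real.sqrt_sq hNq
      · refine ⟨(WithLp.equiv 2 (Fin 2 → ℝ)).symm ![0, -(3*(q:ℝ))], by simp, Or.inr ?_⟩
        rw [norm_sub_eq2]
        have := key2 (-y) x ‖z‖ q (by rw [hNsq]; ring) hN0 (by linarith)
          (by simpa using hdom) (by linarith) hq'
        calc Real.sqrt ((x - 0)^2 + (y - -(3*(q:ℝ)))^2)
            ≤ Real.sqrt ((‖z‖ - q)^2) := by
              apply Real.sqrt_le_sqrt; nlinarith [this]
          _ = ‖z‖ - q := Real.sqrt_sq hNq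
end

section
/- Let c₁ ≥ 0 and let R be the 2×2 rotation matrix with angle φ, i.e. R = [[cos φ, −sin φ],[sin φ, cos φ]]. Then there exist a constant c₂ > 0 and a set B ⊂ ℤ² with exactly 5 elements such that for all u, v ∈ ℝ² with ‖v‖₂ ≤ c₁ there exists b ∈ B with ‖Ru + v − b‖₂ < c₂ − 1/2 or ‖Ru + v − b‖₂ < ‖u‖₂ − 1. -/
private theorem stmt_1_aux (c₁ N t W w0 w1 : ℝ) (hc₁ : 0 ≤ c₁) (hN : 2*c₁+3 ≤ N)
    (hW2 : W^2 = w0^2 + w1^2) (hWnn : 0 ≤ W)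
    (hWt : t - c₁ ≤ W) (hWt' : W ≤ t + c₁) (ht : 3*N + c₁ + 1 < t)
    (hmax : w0^2 ≤ w1^2) (hsgn : 0 ≤ w1) :
    Real.sqrt (w0^2 + (w1 - N)^2) < t - 1 := by
  have hNpos : 0 < N := by linarith
  have hWlb : 3*N + 1 < W := by linarith
  have ht1 : 0 < t - 1 := by linarith
  rw [show (t-1 : ℝ) = Real.sqrt ((t-1)^2) by rw [Real.sqrt_sq ht1.le]]
  apply Real.sqrt_lt_sqrt (by positivity)
  set s2 := Real.sqrt 2 with hs2
  have hs2sq : s2^2 = 2 := Real.sq_sqrt (by norm_num)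
  have hs2nn : 0 ≤ s2 := Real.sqrt_nonneg 2
  have hs2lb : 1.41 < s2 := by nlinarith
  have hw1 : W ≤ s2 * w1 := by
    have h2w : W^2 ≤ (s2*w1)^2 := by nlinarith
    calc W = Real.sqrt (W^2) := (Real.sqrt_sq hWnn).symm
      _ ≤ Real.sqrt ((s2*w1)^2) := Real.sqrt_le_sqrt h2w
      _ = s2*w1 := Real.sqrt_sq (by positivity)
  have h1 : s2*N*W ≤ 2*N*w1 := by
    have h := mul_le_mul_of_nonneg_left hw1 (mul_nonneg hs2nn hNpos.le)
    calc s2*N*W ≤ s2*N*(s2*w1) := h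
      _ = s2^2*(N*w1) := by ring
      _ = 2*(N*w1) := by rw [hs2sq]
      _ = 2*N*w1 := by ring
  have h2 : W^2 - s2*N*W + N^2 < (W - c₁ - 1)^2 := by
    nlinarith [mul_pos (show (0:ℝ) < 0.41*N+1 by linarith) (show (0:ℝ) < W - 3*N - 1 by linarith),
      mul_nonneg (show (0:ℝ) ≤ N - 1 - 2*(c₁+1) by linarith) hWnn,
      mul_nonneg (mul_nonneg (show (0:ℝ) ≤ s2 - 1.41 by linarith) hNpos.le) hWnn]
  have h3 : W - c₁ - 1 ≤ t - 1 := by linarith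
  have h4 : 0 ≤ W - c₁ - 1 := by linarith
  nlinarith [h1, h2, h3, h4]

private theorem stmt_1_norm2 (z : EuclideanSpace ℝ (Fin 2)) :
    ‖z‖ = Real.sqrt ((z 0)^2 + (z 1)^2) := by
  rw [EuclideanSpace.norm_eq]
  simp [Fin.sum_univ_two, sq_abs, Real.norm_eq_abs]

theorem stmt_1 (c₁ : ℝ) (hc₁ : 0 ≤ c₁) (φ : ℝ) :
    ∃ c₂ : ℝ, 0 < c₂ ∧ ∃ B : Finset (Fin 2 → ℤ), B.card = 5 ∧
      ∀ u v : EuclideanSpace ℝ (Fin 2), ‖v‖ ≤ c₁ →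
        ∃ b ∈ B,
          ‖(WithLp.equiv 2 (Fin 2 → ℝ)).symm
              ((!![Real.cos φ, -Real.sin φ; Real.sin φ, Real.cos φ]).mulVec
                ((WithLp.equiv 2 (Fin 2 → ℝ)) u)) + v -
            (WithLp.equiv 2 (Fin 2 → ℝ)).symm (fun i => (b i : ℝ))‖ < c₂ - 1/2 ∨
          ‖(WithLp.equiv 2 (Fin 2 → ℝ)).symm
              ((!![Real.cos φ, -Real.sin φ; Real.sin φ, Real.cos φ]).mulVec
                ((WithLp.equiv 2 (Fin 2 → ℝ)) u)) + v -
            (WithLp.equiv 2 (Fin 2 → ℝ)).symm (fun i => (b i : ℝ))‖ < ‖u‖ - 1 := by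
  set n : ℕ := 2 * ⌈c₁⌉₊ + 3 with hndef
  have hn3 : 3 ≤ n := by omega
  have hNr : 2*c₁ + 3 ≤ (n:ℝ) := by
    have := Nat.le_ceil c₁
    rw [hndef]; push_cast
    nlinarith [this]
  refine ⟨3*(n:ℝ) + 2*c₁ + 3, by nlinarith,
    {![0,0], ![(n:ℤ),0], ![-(n:ℤ),0], ![0,(n:ℤ)], ![0,-(n:ℤ)]}, ?_, ?_⟩
  · rw [Finset.card_insert_of_notMem, Finset.card_insert_of_notMem,
      Finset.card_insert_of_notMem, Finset.card_insert_of_notMem, Finset.card_singleton] <;>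
      simp [funext_iff, Fin.forall_fin_two] <;> omega
  intro u v hv
  set Ru : EuclideanSpace ℝ (Fin 2) := (WithLp.equiv 2 (Fin 2 → ℝ)).symm
      ((!![Real.cos φ, -Real.sin φ; Real.sin φ, Real.cos φ]).mulVec
        ((WithLp.equiv 2 (Fin 2 → ℝ)) u)) with hRudef
  have hRu0 : Ru 0 = Real.cos φ * u 0 - Real.sin φ * u 1 := by
    rw [hRudef]
    simp [Matrix.mulVec, dotProduct, Matrix.vecHead, Matrix.vecTail,
      Fin.sum_univ_two, Matrix.cons_val_zero, Matrix.cons_val_one, Matrix.head_cons]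
    try ring
  have hRu1 : Ru 1 = Real.sin φ * u 0 + Real.cos φ * u 1 := by
    rw [hRudef]
    simp [Matrix.mulVec, dotProduct, Matrix.vecHead, Matrix.vecTail,
      Fin.sum_univ_two, Matrix.cons_val_zero, Matrix.cons_val_one, Matrix.head_cons]
    try ring
  set w0 : ℝ := Ru 0 + v 0 with hw0
  set w1 : ℝ := Ru 1 + v 1 with hw1
  have hRunorm : ‖Ru‖ = ‖u‖ := by
    rw [stmt_1_norm2 Ru, stmt_1_norm2 u, hRu0, hRu1]
    congr 1
    nlinarith [Real.sin_sq_add_cos_sq φ]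
  set W : ℝ := Real.sqrt (w0^2 + w1^2) with hWdef
  have hW2 : W^2 = w0^2 + w1^2 := Real.sq_sqrt (by positivity)
  have hWnn : 0 ≤ W := Real.sqrt_nonneg _
  have hWeq : ‖Ru + v‖ = W := by
    rw [stmt_1_norm2 (Ru + v), hWdef]
    congr 2 <;> simp [PiLp.add_apply]
  have hWub : W ≤ ‖u‖ + c₁ := by
    rw [← hWeq]
    calc ‖Ru + v‖ ≤ ‖Ru‖ + ‖v‖ := norm_add_le _ _
      _ ≤ ‖u‖ + c₁ := by rw [hRunorm]; linarith
  have hWlb : ‖u‖ - c₁ ≤ W := by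
    have h : ‖Ru‖ ≤ ‖Ru + v‖ + ‖v‖ := by
      calc ‖Ru‖ = ‖(Ru + v) - v‖ := by rw [add_sub_cancel_right]
        _ ≤ ‖Ru + v‖ + ‖v‖ := norm_sub_le _ _
    rw [hRunorm, hWeq] at h
    linarith
  have hcoord : ∀ b : Fin 2 → ℤ,
      ‖Ru + v - (WithLp.equiv 2 (Fin 2 → ℝ)).symm (fun i => (b i : ℝ))‖
        = Real.sqrt ((w0 - (b 0 : ℝ))^2 + (w1 - (b 1 : ℝ))^2) := by
    intro b
    rw [stmt_1_norm2]
    congr 2 <;> simp [PiLp.add_apply, PiLp.sub_apply] <;> ring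
  by_cases hcase : ‖u‖ ≤ 3*(n:ℝ) + c₁ + 1
  · refine ⟨![0,0], by simp, Or.inl ?_⟩
    rw [hcoord]
    have h0 : ((![0,0] : Fin 2 → ℤ) 0 : ℝ) = 0 := by simp
    have h1 : ((![0,0] : Fin 2 → ℤ) 1 : ℝ) = 0 := by simp
    rw [h0, h1, show (w0 - 0)^2 + (w1 - 0)^2 = w0^2 + w1^2 by ring, ← hWdef]
    linarith
  · push_neg at hcase
    rcases le_total (w0^2) (w1^2) with hm | hm
    · rcases le_total 0 w1 with hs | hs
      · refine ⟨![0,(n:ℤ)], by simp, Or.inr ?_⟩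
        rw [hcoord]
        have h0 : ((![0,(n:ℤ)] : Fin 2 → ℤ) 0 : ℝ) = 0 := by simp
        have h1 : ((![0,(n:ℤ)] : Fin 2 → ℤ) 1 : ℝ) = (n:ℝ) := by simp
        rw [h0, h1, show (w0 - 0)^2 + (w1 - (n:ℝ))^2 = w0^2 + (w1 - (n:ℝ))^2 by ring]
        exact stmt_1_aux c₁ n ‖u‖ W w0 w1 hc₁ hNr hW2 hWnn hWlb hWub hcase hm hs
      · refine ⟨![0,-(n:ℤ)], by simp, Or.inr ?_⟩
        rw [hcoord]
        have h0 : ((![0,-(n:ℤ)] : Fin 2 → ℤ) 0 : ℝ) = 0 := by simp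
        have h1 : ((![0,-(n:ℤ)] : Fin 2 → ℤ) 1 : ℝ) = -(n:ℝ) := by simp
        rw [h0, h1, show (w0 - 0)^2 + (w1 - -(n:ℝ))^2 = w0^2 + ((-w1) - (n:ℝ))^2 by ring]
        exact stmt_1_aux c₁ n ‖u‖ W w0 (-w1) hc₁ hNr (by rw [hW2]; ring) hWnn hWlb hWub hcase
          (by rw [neg_sq]; exact hm) (by linarith)
    · rcases le_total 0 w0 with hs | hs
      · refine ⟨![(n:ℤ),0], by simp, Or.inr ?_⟩
        rw [hcoord]
        have h0 : ((![(n:ℤ),0] : Fin 2 → ℤ) 0 : ℝ) = (n:ℝ) := by simp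
        have h1 : ((![(n:ℤ),0] : Fin 2 → ℤ) 1 : ℝ) = 0 := by simp
        rw [h0, h1, show (w0 - (n:ℝ))^2 + (w1 - 0)^2 = w1^2 + (w0 - (n:ℝ))^2 by ring]
        exact stmt_1_aux c₁ n ‖u‖ W w1 w0 hc₁ hNr (by rw [hW2]; ring) hWnn hWlb hWub hcase hm hs
      · refine ⟨![-(n:ℤ),0], by simp, Or.inr ?_⟩
        rw [hcoord]
        have h0 : ((![-(n:ℤ),0] : Fin 2 → ℤ) 0 : ℝ) = -(n:ℝ) := by simp
        have h1 : ((![-(n:ℤ),0] : Fin 2 → ℤ) 1 : ℝ) = 0 := by simp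
        rw [h0, h1, show (w0 - -(n:ℝ))^2 + (w1 - 0)^2 = w1^2 + ((-w0) - (n:ℝ))^2 by ring]
        exact stmt_1_aux c₁ n ‖u‖ W w1 (-w0) hc₁ hNr (by rw [hW2]; ring) hWnn hWlb hWub hcase
          (by rw [neg_sq]; exact hm) (by linarith)
end

section
/- Let J ∈ ℝ^{m×m} be a real Jordan block to an eigenvalue λ with |λ| < 1, and let E = {ε ∈ ℝ^m : ‖ε‖_∞ < 1/3}. Then there exist a norm ‖·‖_c on ℝ^m and a constant γ > 0 such that for all x ∈ ℝ^m and ε ∈ E, setting y = Jx + ε: if ‖x‖_c ≤ γ then ‖y‖_c ≤ γ, and if ‖x‖_c ≥ γ then ‖y‖_c ≤ ‖x‖_c − 1/2. -/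
/-- `J` is a real Jordan block to the eigenvalue `lam`: if `lam` is real, it has `lam` on the
diagonal and `1` on the superdiagonal; if `lam = a + ib` is non-real, it consists of `2×2`
blocks `R = [[a, b], [-b, a]]` on the diagonal and `2×2` identity blocks on the superdiagonal. -/
def IsRealJordanBlock {m : ℕ} (J : Matrix (Fin m) (Fin m) ℝ) (lam : ℂ) : Prop :=
  (lam.im = 0 ∧ ∀ i j : Fin m,
      J i j = if (j : ℕ) = (i : ℕ) then lam.re
        else if (j : ℕ) = (i : ℕ) + 1 then 1 else 0) ∨
  (lam.im ≠ 0 ∧ (∃ ℓ : ℕ, m = 2 * ℓ) ∧ ∀ i j : Fin m,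
      J i j = if (j : ℕ) / 2 = (i : ℕ) / 2 then
          (if (i : ℕ) % 2 = (j : ℕ) % 2 then lam.re
            else if (i : ℕ) % 2 = 0 then lam.im else -lam.im)
        else if (j : ℕ) = (i : ℕ) + 2 then 1 else 0)

/-- `N` is a norm on `ℝ^m`. -/
def IsNormOn {m : ℕ} (N : (Fin m → ℝ) → ℝ) : Prop :=
  (∀ x, N x = 0 → x = 0) ∧ (∀ (c : ℝ) (x), N (c • x) = |c| * N x) ∧
    ∀ x y, N (x + y) ≤ N x + N y

/- ### Auxiliary material -/

lemma aux_sum_ite_coe {m : ℕ} (n : ℕ) (f : Fin m → ℝ) :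
    (∑ j : Fin m, if (j:ℕ) = n then f j else 0) = if h : n < m then f ⟨n, h⟩ else 0 := by
  by_cases h : n < m
  · rw [dif_pos h, Finset.sum_eq_single ⟨n, h⟩]
    · simp
    · intro j _ hj
      exact if_neg fun hc => hj (Fin.ext hc)
    · intro hmem; exact absurd (Finset.mem_univ _) hmem
  · rw [dif_neg h]
    exact Finset.sum_eq_zero fun j _ => if_neg (by have := j.isLt; omega)

lemma aux_mulVec_apply {m : ℕ} (J : Matrix (Fin m) (Fin m) ℝ) (x : Fin m → ℝ)
    (i : Fin m) : J.mulVec x i = ∑ j : Fin m, J i j * x j := rfl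

lemma aux_isNormOn_comp {m : ℕ} {V : Type} [NormedAddCommGroup V] [NormedSpace ℝ V]
    (T : (Fin m → ℝ) →ₗ[ℝ] V) (hT : ∀ x, T x = 0 → x = 0) :
    IsNormOn (fun x => ‖T x‖) := by
  refine ⟨fun x hx => hT x (norm_eq_zero.mp hx), fun c x => ?_, fun x y => ?_⟩
  · show ‖T (c • x)‖ = |c| * ‖T x‖
    rw [map_smul, norm_smul, Real.norm_eq_abs]
  · show ‖T (x + y)‖ ≤ ‖T x‖ + ‖T y‖
    rw [map_add]; exact norm_add_le _ _

lemma aux_norm_zero {m : ℕ} {N : (Fin m → ℝ) → ℝ} (hN : IsNormOn N) : N 0 = 0 := by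
  have := hN.2.1 0 0
  simpa using this

lemma aux_norm_nonneg {m : ℕ} {N : (Fin m → ℝ) → ℝ} (hN : IsNormOn N) (x : Fin m → ℝ) :
    0 ≤ N x := by
  have h1 : N (-x) = N x := by
    have := hN.2.1 (-1) x
    simpa using this
  have h2 : N (x + (-x)) ≤ N x + N (-x) := hN.2.2 x (-x)
  rw [add_neg_cancel, aux_norm_zero hN, h1] at h2
  linarith

lemma aux_norm_sum_le {m : ℕ} {N : (Fin m → ℝ) → ℝ} (hN : IsNormOn N)
    {ι : Type} (s : Finset ι) (f : ι → (Fin m → ℝ)) :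
    N (∑ i ∈ s, f i) ≤ ∑ i ∈ s, N (f i) := by
  classical
  induction s using Finset.cons_induction with
  | empty => simp [aux_norm_zero hN]
  | cons a s ha ih =>
      rw [Finset.sum_cons, Finset.sum_cons]
      exact le_trans (hN.2.2 _ _) (by linarith)

/-- Bound for a norm in terms of the sup norm. -/
lemma aux_norm_le {m : ℕ} {N : (Fin m → ℝ) → ℝ} (hN : IsNormOn N) (ε : Fin m → ℝ) :
    N ε ≤ ‖ε‖ * ∑ i : Fin m, N (Pi.single i 1) := by
  have hdec : ε = ∑ i : Fin m, (ε i) • (Pi.single i (1:ℝ) : Fin m → ℝ) := by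
    funext j
    rw [Finset.sum_apply]
    simp [Pi.single_apply, Finset.sum_ite_eq]
  calc N ε = N (∑ i : Fin m, (ε i) • (Pi.single i (1:ℝ) : Fin m → ℝ)) := by rw [← hdec]
    _ ≤ ∑ i : Fin m, N ((ε i) • (Pi.single i (1:ℝ) : Fin m → ℝ)) := aux_norm_sum_le hN _ _
    _ = ∑ i : Fin m, |ε i| * N (Pi.single i (1:ℝ)) := by
        exact Finset.sum_congr rfl fun i _ => hN.2.1 _ _
    _ ≤ ∑ i : Fin m, ‖ε‖ * N (Pi.single i (1:ℝ)) := by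
        refine Finset.sum_le_sum fun i _ => ?_
        have h1 : |ε i| ≤ ‖ε‖ := by
          have := norm_le_pi_norm ε i
          simpa [Real.norm_eq_abs] using this
        exact mul_le_mul_of_nonneg_right h1 (aux_norm_nonneg hN _)
    _ = ‖ε‖ * ∑ i : Fin m, N (Pi.single i 1) := by rw [Finset.mul_sum]

/-- Main reduction: a contracting norm gives the conclusion. -/
lemma aux_reduction {m : ℕ} (J : Matrix (Fin m) (Fin m) ℝ) (N : (Fin m → ℝ) → ℝ)
    (hN : IsNormOn N) (ρ : ℝ) (hρ0 : 0 ≤ ρ) (hρ1 : ρ < 1)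
    (hcontr : ∀ x, N (J.mulVec x) ≤ ρ * N x) :
    ∃ (γ : ℝ), 0 < γ ∧
      ∀ (x ε : Fin m → ℝ), ‖ε‖ < 1/3 →
        (N x ≤ γ → N (J.mulVec x + ε) ≤ γ) ∧
        (γ ≤ N x → N (J.mulVec x + ε) ≤ N x - 1/2) := by
  set S : ℝ := ∑ i : Fin m, N (Pi.single i 1) with hS
  have hS0 : 0 ≤ S := Finset.sum_nonneg fun i _ => aux_norm_nonneg hN _
  set C : ℝ := S / 3 with hC
  have hC0 : 0 ≤ C := by positivity
  have h1ρ : 0 < 1 - ρ := by linarith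
  refine ⟨(C + 1/2) / (1 - ρ), div_pos (by linarith) h1ρ, fun x ε hε => ?_⟩
  set γ : ℝ := (C + 1/2) / (1 - ρ) with hγ
  have hγkey : (1 - ρ) * γ = C + 1/2 := by
    rw [hγ]; field_simp
  have hεN : N ε ≤ C := by
    have h1 := aux_norm_le hN ε
    have h2 : ‖ε‖ * S ≤ (1/3) * S :=
      mul_le_mul_of_nonneg_right (le_of_lt hε) hS0
    rw [hC]; linarith
  have hmain : N (J.mulVec x + ε) ≤ ρ * N x + C :=
    le_trans (hN.2.2 _ _) (by have := hcontr x; linarith)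
  constructor
  · intro hx
    have : ρ * N x ≤ ρ * γ := mul_le_mul_of_nonneg_left hx hρ0
    nlinarith
  · intro hx
    have : ρ * N x + C ≤ N x - 1/2 := by nlinarith
    linarith

/- ### The real eigenvalue case -/

/-- Diagonal scaling map for the real case. -/
def auxTreal (m : ℕ) (t : ℝ) : (Fin m → ℝ) →ₗ[ℝ] (Fin m → ℝ) where
  toFun y := fun i => t^(i:ℕ) * y i
  map_add' x y := by funext i; simp [mul_add]
  map_smul' c x := by funext i; simp [smul_eq_mul]; ring

lemma aux_real_case {m : ℕ} (J : Matrix (Fin m) (Fin m) ℝ) (a : ℝ)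
    (hJr : ∀ i j : Fin m,
      J i j = if (j : ℕ) = (i : ℕ) then a
        else if (j : ℕ) = (i : ℕ) + 1 then 1 else 0)
    (ha : |a| < 1) :
    ∃ N : (Fin m → ℝ) → ℝ, IsNormOn N ∧
      ∀ x, N (J.mulVec x) ≤ ((1 + |a|)/2) * N x := by
  have ha0 : 0 ≤ |a| := abs_nonneg a
  set t : ℝ := 2 / (1 - |a|) with ht
  have ht0 : 0 < t := by rw [ht]; exact div_pos (by norm_num) (by linarith)
  have htinv : 1 / t = (1 - |a|) / 2 := by rw [ht, one_div_div]
  set T := auxTreal m t with hT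
  have hTinj0 : ∀ x, T x = 0 → x = 0 := by
    intro x hx
    funext i
    have := congrFun hx i
    simp only [hT, auxTreal, LinearMap.coe_mk, AddHom.coe_mk, Pi.zero_apply] at this
    have htne : t^(i:ℕ) ≠ 0 := pow_ne_zero _ (ne_of_gt ht0)
    simpa [htne] using this
  have hmv : ∀ (x : Fin m → ℝ) (i : Fin m), J.mulVec x i =
      a * x i + (if h : (i:ℕ) + 1 < m then x ⟨(i:ℕ)+1, h⟩ else 0) := by
    intro x i
    have key : ∀ j : Fin m, J i j * x j =
        (if (j:ℕ) = (i:ℕ) then a * x j else 0) +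
        (if (j:ℕ) = (i:ℕ) + 1 then x j else 0) := by
      intro j
      rw [hJr]
      by_cases h1 : (j:ℕ) = (i:ℕ)
      · rw [if_pos h1, if_pos h1, if_neg (by omega), add_zero]
      · rw [if_neg h1, if_neg h1, zero_add]
        by_cases h2 : (j:ℕ) = (i:ℕ) + 1
        · rw [if_pos h2, if_pos h2, one_mul]
        · rw [if_neg h2, if_neg h2, zero_mul]
    rw [aux_mulVec_apply]
    rw [Finset.sum_congr rfl (fun j _ => key j), Finset.sum_add_distrib,
      aux_sum_ite_coe, aux_sum_ite_coe, dif_pos i.isLt]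
  refine ⟨fun x => ‖T x‖, aux_isNormOn_comp T hTinj0, fun x => ?_⟩
  have hρ0 : (0:ℝ) ≤ (1 + |a|)/2 * ‖T x‖ := by positivity
  refine (pi_norm_le_iff_of_nonneg hρ0).2 fun i => ?_
  have hTx : ∀ j : Fin m, |t^(j:ℕ) * x j| ≤ ‖T x‖ := by
    intro j
    have h0 := norm_le_pi_norm (T x) j
    have he : (T x) j = t^(j:ℕ) * x j := rfl
    rw [he, Real.norm_eq_abs] at h0
    exact h0
  have hTi : (T (J.mulVec x)) i = t^(i:ℕ) * (J.mulVec x i) := rfl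
  rw [Real.norm_eq_abs, hTi, hmv]
  have h1 := hTx i
  have hTx0 : 0 ≤ ‖T x‖ := norm_nonneg _
  by_cases h : (i:ℕ) + 1 < m
  · rw [dif_pos h]
    have h2 : |t^((i:ℕ)+1) * x ⟨(i:ℕ)+1, h⟩| ≤ ‖T x‖ := hTx ⟨(i:ℕ)+1, h⟩
    have hexp : t^(i:ℕ) * (a * x i + x ⟨(i:ℕ)+1, h⟩) =
        a * (t^(i:ℕ) * x i) + (1/t) * (t^((i:ℕ)+1) * x ⟨(i:ℕ)+1, h⟩) := by
      field_simp
      ring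
    rw [hexp]
    have htinv0 : 0 < 1/t := by positivity
    have habs : |a * (t^(i:ℕ) * x i) + (1/t) * (t^((i:ℕ)+1) * x ⟨(i:ℕ)+1, h⟩)|
        ≤ |a| * |t^(i:ℕ) * x i| + (1/t) * |t^((i:ℕ)+1) * x ⟨(i:ℕ)+1, h⟩| := by
      have e1 : |a * (t^(i:ℕ) * x i)| = |a| * |t^(i:ℕ) * x i| := abs_mul _ _
      have e2 : |(1/t) * (t^((i:ℕ)+1) * x ⟨(i:ℕ)+1, h⟩)| =
          (1/t) * |t^((i:ℕ)+1) * x ⟨(i:ℕ)+1, h⟩| := by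
        rw [abs_mul, abs_of_pos htinv0]
      have e3 := abs_add_le (a * (t^(i:ℕ) * x i)) ((1/t) * (t^((i:ℕ)+1) * x ⟨(i:ℕ)+1, h⟩))
      rw [e1, e2] at e3
      exact e3
    have key : |a| * |t^(i:ℕ) * x i| + (1/t) * |t^((i:ℕ)+1) * x ⟨(i:ℕ)+1, h⟩|
        ≤ (|a| + 1/t) * ‖T x‖ := by nlinarith [abs_nonneg (t^(i:ℕ) * x i)]
    have hsum : |a| + 1/t = (1 + |a|)/2 := by rw [htinv]; ring
    rw [hsum] at key
    linarith
  · rw [dif_neg h]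
    rw [add_zero, show t^(i:ℕ) * (a * x i) = a * (t^(i:ℕ) * x i) by ring, abs_mul]
    nlinarith [abs_nonneg a, abs_nonneg (t^(i:ℕ) * x i)]

/- ### The complex eigenvalue case -/

/-- Pairs of coordinates combined into a complex number. -/
def auxZ {m ℓ : ℕ} (hm : m = 2 * ℓ) (y : Fin m → ℝ) (k : Fin ℓ) : ℂ :=
  ⟨y ⟨2*(k:ℕ), by omega⟩, y ⟨2*(k:ℕ)+1, by omega⟩⟩

lemma auxZ_re {m ℓ : ℕ} (hm : m = 2 * ℓ) (y : Fin m → ℝ) (k : Fin ℓ) :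
    (auxZ hm y k).re = y ⟨2*(k:ℕ), by omega⟩ := rfl

lemma auxZ_im {m ℓ : ℕ} (hm : m = 2 * ℓ) (y : Fin m → ℝ) (k : Fin ℓ) :
    (auxZ hm y k).im = y ⟨2*(k:ℕ)+1, by omega⟩ := rfl

/-- Weighted complexification map for the complex case. -/
def auxTc {m ℓ : ℕ} (hm : m = 2 * ℓ) (t : ℝ) : (Fin m → ℝ) →ₗ[ℝ] (Fin ℓ → ℂ) where
  toFun y := fun k => ((t^(k:ℕ) : ℝ) : ℂ) * auxZ hm y k
  map_add' x y := by
    funext k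
    show ((t^(k:ℕ) : ℝ) : ℂ) * auxZ hm (x + y) k =
      ((t^(k:ℕ) : ℝ) : ℂ) * auxZ hm x k + ((t^(k:ℕ) : ℝ) : ℂ) * auxZ hm y k
    rw [show auxZ hm (x + y) k = auxZ hm x k + auxZ hm y k from
      Complex.ext (by simp [auxZ_re, auxZ_im]) (by simp [auxZ_re, auxZ_im]), mul_add]
  map_smul' c x := by
    funext k
    show ((t^(k:ℕ) : ℝ) : ℂ) * auxZ hm (c • x) k =
      c • (((t^(k:ℕ) : ℝ) : ℂ) * auxZ hm x k)
    rw [show auxZ hm (c • x) k = (c : ℂ) * auxZ hm x k from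
      Complex.ext
        (by simp [auxZ_re, auxZ_im, Complex.mul_re, Complex.ofReal_re, Complex.ofReal_im])
        (by simp [auxZ_im, auxZ_re, Complex.mul_im, Complex.ofReal_re, Complex.ofReal_im]),
      Complex.real_smul]
    ring

lemma aux_complex_case {m ℓ : ℕ} (J : Matrix (Fin m) (Fin m) ℝ) (lam : ℂ)
    (hm : m = 2 * ℓ)
    (hJc : ∀ i j : Fin m,
      J i j = if (j : ℕ) / 2 = (i : ℕ) / 2 then
          (if (i : ℕ) % 2 = (j : ℕ) % 2 then lam.re
            else if (i : ℕ) % 2 = 0 then lam.im else -lam.im)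
        else if (j : ℕ) = (i : ℕ) + 2 then 1 else 0)
    (hlam : ‖lam‖ < 1) :
    ∃ N : (Fin m → ℝ) → ℝ, IsNormOn N ∧
      ∀ x, N (J.mulVec x) ≤ ((1 + ‖lam‖)/2) * N x := by
  set L : ℝ := ‖lam‖ with hLdef
  have hL0 : 0 ≤ L := norm_nonneg lam
  set t : ℝ := 2 / (1 - L) with ht
  have ht0 : 0 < t := by rw [ht]; exact div_pos (by norm_num) (by linarith)
  have htinv : 1 / t = (1 - L) / 2 := by rw [ht, one_div_div]
  set T := auxTc hm t with hT
  have hTapp : ∀ (y : Fin m → ℝ) (k : Fin ℓ),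
      T y k = ((t^(k:ℕ) : ℝ) : ℂ) * auxZ hm y k := fun y k => rfl
  have hTinj : ∀ x, T x = 0 → x = 0 := by
    intro x hx
    funext i
    have hk : (i:ℕ)/2 < ℓ := by have := i.isLt; omega
    have h0 := congrFun hx ⟨(i:ℕ)/2, hk⟩
    rw [hTapp, Pi.zero_apply, mul_eq_zero] at h0
    have htne : ((t^((i:ℕ)/2) : ℝ) : ℂ) ≠ 0 := by
      simp only [ne_eq, Complex.ofReal_eq_zero]
      exact pow_ne_zero _ (ne_of_gt ht0)
    have hz0 : auxZ hm x ⟨(i:ℕ)/2, hk⟩ = 0 := h0.resolve_left htne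
    rw [Complex.ext_iff, auxZ_re, auxZ_im] at hz0
    rcases Nat.mod_two_eq_zero_or_one (i:ℕ) with hpar | hpar
    · have : i = ⟨2*((i:ℕ)/2), by omega⟩ :=
        Fin.ext (show (i:ℕ) = 2*((i:ℕ)/2) by omega)
      rw [this]
      exact hz0.1
    · have : i = ⟨2*((i:ℕ)/2)+1, by omega⟩ :=
        Fin.ext (show (i:ℕ) = 2*((i:ℕ)/2)+1 by omega)
      rw [this]
      exact hz0.2
  -- mulVec formulas
  have hmv1 : ∀ (x : Fin m → ℝ) (k : ℕ) (i : Fin m), (i:ℕ) = 2*k → ∀ (hk : 2*k+1 < m),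
      J.mulVec x i = lam.re * x ⟨2*k, by omega⟩ + lam.im * x ⟨2*k+1, hk⟩ +
        (if h : 2*k+2 < m then x ⟨2*k+2, h⟩ else 0) := by
    intro x k i hi hk
    have key : ∀ j : Fin m, J i j * x j =
        (if (j:ℕ) = 2*k then lam.re * x j else 0) +
        ((if (j:ℕ) = 2*k+1 then lam.im * x j else 0) +
         (if (j:ℕ) = 2*k+2 then x j else 0)) := by
      intro j
      rw [hJc]
      by_cases h1 : (j:ℕ) = 2*k
      · rw [if_pos (show (j:ℕ)/2 = (i:ℕ)/2 by omega),
          if_pos (show (i:ℕ)%2 = (j:ℕ)%2 by omega), if_pos h1,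
          if_neg (by omega), if_neg (by omega)]
        ring
      · by_cases h2 : (j:ℕ) = 2*k+1
        · rw [if_pos (show (j:ℕ)/2 = (i:ℕ)/2 by omega),
            if_neg (show ¬((i:ℕ)%2 = (j:ℕ)%2) by omega),
            if_pos (show (i:ℕ)%2 = 0 by omega),
            if_neg h1, if_pos h2, if_neg (by omega)]
          ring
        · by_cases h3 : (j:ℕ) = 2*k+2
          · rw [if_neg (show ¬((j:ℕ)/2 = (i:ℕ)/2) by omega),
              if_pos (show (j:ℕ) = (i:ℕ)+2 by omega),
              if_neg h1, if_neg h2, if_pos h3]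
            ring
          · rw [if_neg (show ¬((j:ℕ)/2 = (i:ℕ)/2) by omega),
              if_neg (show ¬((j:ℕ) = (i:ℕ)+2) by omega),
              if_neg h1, if_neg h2, if_neg h3]
            ring
    rw [aux_mulVec_apply]
    rw [Finset.sum_congr rfl (fun j _ => key j), Finset.sum_add_distrib,
      Finset.sum_add_distrib, aux_sum_ite_coe, aux_sum_ite_coe, aux_sum_ite_coe,
      dif_pos (show 2*k < m by omega), dif_pos hk]
    ring
  have hmv2 : ∀ (x : Fin m → ℝ) (k : ℕ) (i : Fin m), (i:ℕ) = 2*k+1 → ∀ (hk : 2*k+1 < m),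
      J.mulVec x i = -lam.im * x ⟨2*k, by omega⟩ + lam.re * x ⟨2*k+1, hk⟩ +
        (if h : 2*k+3 < m then x ⟨2*k+3, h⟩ else 0) := by
    intro x k i hi hk
    have key : ∀ j : Fin m, J i j * x j =
        (if (j:ℕ) = 2*k then -lam.im * x j else 0) +
        ((if (j:ℕ) = 2*k+1 then lam.re * x j else 0) +
         (if (j:ℕ) = 2*k+3 then x j else 0)) := by
      intro j
      rw [hJc]
      by_cases h1 : (j:ℕ) = 2*k
      · rw [if_pos (show (j:ℕ)/2 = (i:ℕ)/2 by omega),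
          if_neg (show ¬((i:ℕ)%2 = (j:ℕ)%2) by omega),
          if_neg (show ¬((i:ℕ)%2 = 0) by omega), if_pos h1,
          if_neg (by omega), if_neg (by omega)]
        ring
      · by_cases h2 : (j:ℕ) = 2*k+1
        · rw [if_pos (show (j:ℕ)/2 = (i:ℕ)/2 by omega),
            if_pos (show (i:ℕ)%2 = (j:ℕ)%2 by omega),
            if_neg h1, if_pos h2, if_neg (by omega)]
          ring
        · by_cases h3 : (j:ℕ) = 2*k+3
          · rw [if_neg (show ¬((j:ℕ)/2 = (i:ℕ)/2) by omega),
              if_pos (show (j:ℕ) = (i:ℕ)+2 by omega),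
              if_neg h1, if_neg h2, if_pos h3]
            ring
          · rw [if_neg (show ¬((j:ℕ)/2 = (i:ℕ)/2) by omega),
              if_neg (show ¬((j:ℕ) = (i:ℕ)+2) by omega),
              if_neg h1, if_neg h2, if_neg h3]
            ring
    rw [aux_mulVec_apply]
    rw [Finset.sum_congr rfl (fun j _ => key j), Finset.sum_add_distrib,
      Finset.sum_add_distrib, aux_sum_ite_coe, aux_sum_ite_coe, aux_sum_ite_coe,
      dif_pos (show 2*k < m by omega), dif_pos hk]
    ring
  refine ⟨fun x => ‖T x‖, aux_isNormOn_comp T hTinj, fun x => ?_⟩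
  have hρ0 : (0:ℝ) ≤ (1 + L)/2 * ‖T x‖ := by positivity
  refine (pi_norm_le_iff_of_nonneg hρ0).2 fun k => ?_
  have hTzk : ∀ k' : Fin ℓ, t^(k':ℕ) * ‖auxZ hm x k'‖ ≤ ‖T x‖ := by
    intro k'
    have h1 := norm_le_pi_norm (T x) k'
    rw [hTapp, norm_mul, Complex.norm_real, Real.norm_eq_abs,
      abs_of_pos (pow_pos ht0 _)] at h1
    exact h1
  have hTx0 : 0 ≤ ‖T x‖ := norm_nonneg _
  have hconj : ‖(starRingEnd ℂ) lam‖ = L := by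
    rw [RCLike.norm_conj, hLdef]
  rw [hTapp, norm_mul, Complex.norm_real, Real.norm_eq_abs, abs_of_pos (pow_pos ht0 _)]
  -- identify the block
  by_cases hk1 : (k:ℕ) + 1 < ℓ
  · have hble : auxZ hm (J.mulVec x) k =
        (starRingEnd ℂ) lam * auxZ hm x k + auxZ hm x ⟨(k:ℕ)+1, hk1⟩ := by
      apply Complex.ext
      · rw [auxZ_re, Complex.add_re, Complex.mul_re, Complex.conj_re, Complex.conj_im,
          auxZ_re, auxZ_im, auxZ_re,
          hmv1 x (k:ℕ) ⟨2*(k:ℕ), by omega⟩ rfl (by omega), dif_pos (by omega : 2*(k:ℕ)+2 < m)]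
        have he : (⟨2*((k:ℕ)+1), by omega⟩ : Fin m) = ⟨2*(k:ℕ)+2, by omega⟩ :=
          Fin.ext (show 2*((k:ℕ)+1) = 2*(k:ℕ)+2 by omega)
        rw [he]
        ring
      · rw [auxZ_im, Complex.add_im, Complex.mul_im, Complex.conj_re, Complex.conj_im,
          auxZ_re, auxZ_im, auxZ_im,
          hmv2 x (k:ℕ) ⟨2*(k:ℕ)+1, by omega⟩ rfl (by omega), dif_pos (by omega : 2*(k:ℕ)+3 < m)]
        have he : (⟨2*((k:ℕ)+1)+1, by omega⟩ : Fin m) = ⟨2*(k:ℕ)+3, by omega⟩ :=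
          Fin.ext (show 2*((k:ℕ)+1)+1 = 2*(k:ℕ)+3 by omega)
        rw [he]
        ring
    rw [hble]
    have hn1 : ‖(starRingEnd ℂ) lam * auxZ hm x k + auxZ hm x ⟨(k:ℕ)+1, hk1⟩‖ ≤
        L * ‖auxZ hm x k‖ + ‖auxZ hm x ⟨(k:ℕ)+1, hk1⟩‖ := by
      calc _ ≤ ‖(starRingEnd ℂ) lam * auxZ hm x k‖ + ‖auxZ hm x ⟨(k:ℕ)+1, hk1⟩‖ :=
            norm_add_le _ _
        _ = _ := by rw [norm_mul, hconj]
    have hb1 := hTzk k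
    have hb2 := hTzk ⟨(k:ℕ)+1, hk1⟩
    have hpow : t^((k:ℕ)+1) = t * t^(k:ℕ) := by ring
    have hzn1 : 0 ≤ ‖auxZ hm x k‖ := norm_nonneg _
    have hzn2 : 0 ≤ ‖auxZ hm x ⟨(k:ℕ)+1, hk1⟩‖ := norm_nonneg _
    have htpow : 0 < t^(k:ℕ) := pow_pos ht0 _
    -- t^k * (L*z1 + z2) = L*(t^k z1) + (1/t)*(t^{k+1} z2)
    have hstep : t^(k:ℕ) * (L * ‖auxZ hm x k‖ + ‖auxZ hm x ⟨(k:ℕ)+1, hk1⟩‖) ≤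
        (L + 1/t) * ‖T x‖ := by
      have e1 : t^(k:ℕ) * (L * ‖auxZ hm x k‖) = L * (t^(k:ℕ) * ‖auxZ hm x k‖) := by ring
      have hb2' : t^((k:ℕ)+1) * ‖auxZ hm x ⟨(k:ℕ)+1, hk1⟩‖ ≤ ‖T x‖ := hb2
      have e2 : t^(k:ℕ) * ‖auxZ hm x ⟨(k:ℕ)+1, hk1⟩‖ =
          (1/t) * (t^((k:ℕ)+1) * ‖auxZ hm x ⟨(k:ℕ)+1, hk1⟩‖) := by
        rw [hpow]; field_simp
      have h3 : L * (t^(k:ℕ) * ‖auxZ hm x k‖) ≤ L * ‖T x‖ :=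
        mul_le_mul_of_nonneg_left hb1 hL0
      have h4 : (1/t) * (t^((k:ℕ)+1) * ‖auxZ hm x ⟨(k:ℕ)+1, hk1⟩‖) ≤ (1/t) * ‖T x‖ :=
        mul_le_mul_of_nonneg_left hb2' (by positivity)
      have e3 : (L + 1/t) * ‖T x‖ = L * ‖T x‖ + (1/t) * ‖T x‖ := by ring
      rw [mul_add, e1, e2, e3]
      linarith
    have hLsum : L + 1/t = (1 + L)/2 := by rw [htinv]; ring
    rw [hLsum] at hstep
    have hfin := mul_le_mul_of_nonneg_left hn1 (le_of_lt htpow)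
    linarith
  · have hble : auxZ hm (J.mulVec x) k = (starRingEnd ℂ) lam * auxZ hm x k := by
      apply Complex.ext
      · rw [auxZ_re, Complex.mul_re, Complex.conj_re, Complex.conj_im,
          auxZ_re, auxZ_im,
          hmv1 x (k:ℕ) ⟨2*(k:ℕ), by omega⟩ rfl (by omega), dif_neg (by omega : ¬(2*(k:ℕ)+2 < m))]
        ring
      · rw [auxZ_im, Complex.mul_im, Complex.conj_re, Complex.conj_im,
          auxZ_re, auxZ_im,
          hmv2 x (k:ℕ) ⟨2*(k:ℕ)+1, by omega⟩ rfl (by omega), dif_neg (by omega : ¬(2*(k:ℕ)+3 < m))]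
        ring
    rw [hble, norm_mul, hconj]
    have hb1 := hTzk k
    have hzn1 : 0 ≤ ‖auxZ hm x k‖ := norm_nonneg _
    have htpow : 0 < t^(k:ℕ) := pow_pos ht0 _
    nlinarith
  -- end complex case

theorem stmt_2 {m : ℕ} (J : Matrix (Fin m) (Fin m) ℝ) (lam : ℂ)
    (hJ : IsRealJordanBlock J lam) (hlam : ‖lam‖ < 1) :
    ∃ (N : (Fin m → ℝ) → ℝ) (γ : ℝ), IsNormOn N ∧ 0 < γ ∧
      ∀ (x ε : Fin m → ℝ), ‖ε‖ < 1/3 →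
        (N x ≤ γ → N (J.mulVec x + ε) ≤ γ) ∧
        (γ ≤ N x → N (J.mulVec x + ε) ≤ N x - 1/2) := by
  have hL0 : 0 ≤ ‖lam‖ := norm_nonneg lam
  obtain ⟨N, hN, hcontr⟩ :
      ∃ N : (Fin m → ℝ) → ℝ, IsNormOn N ∧
        ∀ x, N (J.mulVec x) ≤ ((1 + ‖lam‖)/2) * N x := by
    rcases hJ with ⟨him, hJr⟩ | ⟨him, ⟨ℓ, hm⟩, hJc⟩
    · have habs : |lam.re| = ‖lam‖ := by
        have : lam = (lam.re : ℂ) := Complex.ext rfl (by simp [him])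
        rw [this, Complex.norm_real, Real.norm_eq_abs, Complex.ofReal_re]
      obtain ⟨N, hN, hc⟩ := aux_real_case J lam.re hJr (by rw [habs]; exact hlam)
      exact ⟨N, hN, by rw [← habs]; exact hc⟩
    · exact aux_complex_case J lam hm hJc hlam
  obtain ⟨γ, hγ0, hγ⟩ := aux_reduction J N hN ((1 + ‖lam‖)/2)
    (by positivity) (by linarith) hcontr
  exact ⟨N, γ, hN, hγ0, hγ⟩
end

section
/- Let J ∈ ℝ^{m×m} be a real Jordan block to an eigenvalue λ with |λ| > 1, let E = {ε ∈ ℝ^m : ‖ε‖_∞ < 1/3}, and let D = {d ∈ ℤ^m : ‖d‖_∞ ≤ 2|λ| + 2 + 1/3}. Then for each x ∈ ℝ^m with ‖x‖_∞ ≤ 1 there exists d ∈ D such that for all ε ∈ E the vector y = Jx − d + ε satisfies ‖y‖_∞ ≤ 1. -/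
lemma sum_indicator_le {m : ℕ} (k : ℕ) (c : ℝ) (hc : 0 ≤ c) :
    ∑ j : Fin m, (if (j : ℕ) = k then c else 0) ≤ c := by
  classical
  by_cases h : k < m
  · rw [Finset.sum_eq_single (⟨k, h⟩ : Fin m)]
    · simp
    · intro b _ hb
      simp only [ite_eq_right_iff]
      intro hbk
      exact absurd (Fin.ext hbk) hb
    · simp
  · have hne : ∀ j : Fin m, (j : ℕ) ≠ k := fun j => by have := j.isLt; omega
    rw [Finset.sum_eq_zero]
    · exact hc
    · intro j _
      rw [if_neg (hne j)]

lemma row_bound {m : ℕ} (J : Matrix (Fin m) (Fin m) ℝ) (lam : ℂ)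
    (hJ : IsRealJordanBlock J lam) (hlam : 1 < ‖lam‖) (i : Fin m) :
    ∑ j, |J i j| ≤ 2 * ‖lam‖ + 1 := by
  have habs : 0 ≤ ‖lam‖ := norm_nonneg _
  have hre : |lam.re| ≤ ‖lam‖ := Complex.abs_re_le_norm lam
  have him : |lam.im| ≤ ‖lam‖ := Complex.abs_im_le_norm lam
  rcases hJ with ⟨_, hrow⟩ | ⟨_, _, hrow⟩
  · calc ∑ j, |J i j|
        ≤ ∑ j : Fin m, ((if (j : ℕ) = (i : ℕ) then |lam.re| else 0)
            + (if (j : ℕ) = (i : ℕ) + 1 then (1:ℝ) else 0)) := by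
          apply Finset.sum_le_sum
          intro j _
          rw [hrow i j]
          split_ifs with h1 h2 <;> simp_all
      _ = (∑ j : Fin m, (if (j : ℕ) = (i : ℕ) then |lam.re| else 0))
            + ∑ j : Fin m, (if (j : ℕ) = (i : ℕ) + 1 then (1:ℝ) else 0) :=
          Finset.sum_add_distrib
      _ ≤ |lam.re| + 1 := by
          gcongr
          · exact sum_indicator_le _ _ (abs_nonneg _)
          · exact sum_indicator_le _ _ zero_le_one
      _ ≤ 2 * ‖lam‖ + 1 := by nlinarith
  · set p : ℕ := 2 * ((i : ℕ) / 2) + (1 - (i : ℕ) % 2) with hp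
    calc ∑ j, |J i j|
        ≤ ∑ j : Fin m, ((if (j : ℕ) = (i : ℕ) then |lam.re| else 0)
            + (if (j : ℕ) = p then |lam.im| else 0)
            + (if (j : ℕ) = (i : ℕ) + 2 then (1:ℝ) else 0)) := by
          apply Finset.sum_le_sum
          intro j _
          rw [hrow i j]
          by_cases hb : (j : ℕ) / 2 = (i : ℕ) / 2
          · by_cases hpar : (i : ℕ) % 2 = (j : ℕ) % 2
            · have e1 : (j : ℕ) = (i : ℕ) := by omega
              have e2 : ¬((j : ℕ) = p) := by omega
              have e3 : ¬((j : ℕ) = (i : ℕ) + 2) := by omega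
              rw [if_pos hb, if_pos hpar, if_pos e1, if_neg e2, if_neg e3]
              simp [abs_nonneg]
            · have e1 : ¬((j : ℕ) = (i : ℕ)) := by omega
              have e2 : (j : ℕ) = p := by omega
              have e3 : ¬((j : ℕ) = (i : ℕ) + 2) := by omega
              rw [if_pos hb, if_neg hpar, if_neg e1, if_pos e2, if_neg e3]
              split_ifs <;> simp [abs_neg, abs_nonneg]
          · have e1 : ¬((j : ℕ) = (i : ℕ)) := by omega
            have e2 : ¬((j : ℕ) = p) := by omega
            rw [if_neg hb, if_neg e1, if_neg e2]
            split_ifs <;> simp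
      _ = (∑ j : Fin m, (if (j : ℕ) = (i : ℕ) then |lam.re| else 0))
            + (∑ j : Fin m, (if (j : ℕ) = p then |lam.im| else 0))
            + ∑ j : Fin m, (if (j : ℕ) = (i : ℕ) + 2 then (1:ℝ) else 0) := by
          rw [Finset.sum_add_distrib, Finset.sum_add_distrib]
      _ ≤ |lam.re| + |lam.im| + 1 := by
          gcongr
          · exact sum_indicator_le _ _ (abs_nonneg _)
          · exact sum_indicator_le _ _ (abs_nonneg _)
          · exact sum_indicator_le _ _ zero_le_one
      _ ≤ 2 * ‖lam‖ + 1 := by nlinarith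

theorem stmt_4 {m : ℕ} (J : Matrix (Fin m) (Fin m) ℝ) (lam : ℂ)
    (hJ : IsRealJordanBlock J lam) (hlam : 1 < ‖lam‖)
    (x : Fin m → ℝ) (hx : ‖x‖ ≤ 1) :
    ∃ d : Fin m → ℤ, (∀ i, |(d i : ℝ)| ≤ 2 * ‖lam‖ + 2 + 1/3) ∧
      ∀ ε : Fin m → ℝ, ‖ε‖ < 1/3 →
        ‖J.mulVec x - (fun i => (d i : ℝ)) + ε‖ ≤ 1 := by
  have hmul : ∀ i, |J.mulVec x i| ≤ 2 * ‖lam‖ + 1 := by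
    intro i
    have hxj : ∀ j, |x j| ≤ 1 := by
      intro j
      calc |x j| = ‖x j‖ := rfl
        _ ≤ ‖x‖ := norm_le_pi_norm x j
        _ ≤ 1 := hx
    calc |J.mulVec x i| = |∑ j, J i j * x j| := rfl
      _ ≤ ∑ j, |J i j * x j| := Finset.abs_sum_le_sum_abs _ _
      _ ≤ ∑ j, |J i j| := by
          apply Finset.sum_le_sum
          intro j _
          rw [abs_mul]
          calc |J i j| * |x j| ≤ |J i j| * 1 := by
                apply mul_le_mul_of_nonneg_left (hxj j) (abs_nonneg _)
            _ = |J i j| := mul_one _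
      _ ≤ 2 * ‖lam‖ + 1 := row_bound J lam hJ hlam i
  refine ⟨fun i => round (J.mulVec x i), ?_, ?_⟩
  · intro i
    have h1 : |J.mulVec x i - (round (J.mulVec x i) : ℝ)| ≤ 1/2 := abs_sub_round _
    have h2 := hmul i
    have : |(round (J.mulVec x i) : ℝ)| ≤ |J.mulVec x i| + 1/2 := by
      have := abs_sub_abs_le_abs_sub ((round (J.mulVec x i) : ℝ)) (J.mulVec x i)
      rw [abs_sub_comm] at this
      linarith
    linarith
  · intro ε hε
    rw [pi_norm_le_iff_of_nonneg zero_le_one]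
    intro i
    have h1 : |J.mulVec x i - (round (J.mulVec x i) : ℝ)| ≤ 1/2 := abs_sub_round _
    have h2 : |ε i| ≤ ‖ε‖ := norm_le_pi_norm ε i
    simp only [Pi.add_apply, Pi.sub_apply]
    calc ‖J.mulVec x i - (round (J.mulVec x i) : ℝ) + ε i‖
        ≤ |J.mulVec x i - (round (J.mulVec x i) : ℝ)| + |ε i| := abs_add_le _ _
      _ ≤ 1/2 + 1/3 := by linarith
      _ ≤ 1 := by norm_num
end

section
/- Let M ∈ ℤ^{m×m} with det M ≠ 0 and let D ⊂ ℤ^m be a finite set containing 0 such that ℤ^m ⊆ Fin_D(M). Then Fin_D(M) is closed under addition and subtraction. -/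
/-- The set of vectors representable as a finite sum `∑_{k ∈ I} M^k d_k` with `I ⊂ ℤ`
finite nonempty and digits `d_k ∈ D`, where negative powers of `M` are taken over `ℚ`. -/
noncomputable def FinD {m : ℕ} (M : Matrix (Fin m) (Fin m) ℤ) (D : Set (Fin m → ℤ)) :
    Set (Fin m → ℚ) :=
  {x | ∃ I : Finset ℤ, I.Nonempty ∧ ∃ c : ℤ → (Fin m → ℤ), (∀ k ∈ I, c k ∈ D) ∧
    x = ∑ k ∈ I, ((M.map (Int.cast : ℤ → ℚ)) ^ k).mulVec (fun i => (c k i : ℚ))}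

section aux
variable {m : ℕ} (M : Matrix (Fin m) (Fin m) ℤ) (D : Set (Fin m → ℤ))

lemma det_cast (hM : M.det ≠ 0) : IsUnit (M.map (Int.cast : ℤ → ℚ)).det := by
  have h : M.map (Int.cast : ℤ → ℚ) = (Int.castRingHom ℚ).mapMatrix M := rfl
  rw [h, ← RingHom.map_det]
  simp [isUnit_iff_ne_zero, hM]

lemma mulVec_sum' (A : Matrix (Fin m) (Fin m) ℚ) (I : Finset ℤ) (f : ℤ → Fin m → ℚ) :
    A.mulVec (∑ k ∈ I, f k) = ∑ k ∈ I, A.mulVec (f k) := by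
  simp only [← Matrix.mulVecLin_apply]
  exact map_sum _ _ _

/-- FinD is closed under multiplication by zpow of A. -/
lemma finD_shift (hM : M.det ≠ 0) (n : ℤ) {x : Fin m → ℚ} (hx : x ∈ FinD M D) :
    ((M.map (Int.cast : ℤ → ℚ)) ^ n).mulVec x ∈ FinD M D := by
  have hdet := det_cast M hM
  obtain ⟨I, hI, c, hc, rfl⟩ := hx
  refine ⟨I.map ⟨(· + n), add_left_injective n⟩, hI.map, fun k => c (k - n), ?_, ?_⟩
  · intro k hk
    simp only [Finset.mem_map, Function.Embedding.coeFn_mk] at hk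
    obtain ⟨j, hj, rfl⟩ := hk
    simpa using hc j hj
  · rw [mulVec_sum', Finset.sum_map]
    refine Finset.sum_congr rfl fun k hk => ?_
    simp only [Function.Embedding.coeFn_mk, add_sub_cancel_right,
      Matrix.mulVec_mulVec]
    rw [← Matrix.zpow_add hdet, add_comm]

lemma finD_int (hM : M.det ≠ 0) {x : Fin m → ℚ} (hx : x ∈ FinD M D) :
    ∃ N : ℕ, ∀ N' : ℕ, N ≤ N' → ∃ z : Fin m → ℤ,
      ((M.map (Int.cast : ℤ → ℚ)) ^ (N' : ℤ)).mulVec x = fun i => (z i : ℚ) := by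
  have hdet := det_cast M hM
  obtain ⟨I, hI, c, hc, rfl⟩ := hx
  refine ⟨(I.min' hI).natAbs, fun N' hN' => ?_⟩
  refine ⟨∑ k ∈ I, (M ^ ((N' : ℤ) + k).toNat).mulVec (c k), ?_⟩
  rw [mulVec_sum']
  funext i
  rw [Finset.sum_apply]
  have hcast : ((∑ k ∈ I, (M ^ ((N' : ℤ) + k).toNat).mulVec (c k)) i : ℚ)
      = ∑ k ∈ I, (((M ^ ((N' : ℤ) + k).toNat).mulVec (c k)) i : ℚ) := by
    push_cast [Finset.sum_apply]; ring
  rw [hcast]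
  refine Finset.sum_congr rfl fun k hk => ?_
  have hknn : 0 ≤ (N' : ℤ) + k := by
    have h1 : I.min' hI ≤ k := Finset.min'_le I k hk
    have h2 : ((I.min' hI).natAbs : ℤ) ≤ (N' : ℤ) := by exact_mod_cast hN'
    omega
  rw [Matrix.mulVec_mulVec, ← Matrix.zpow_add hdet]
  have hpow : (M.map (Int.cast : ℤ → ℚ)) ^ ((N' : ℤ) + k)
      = (M ^ ((N' : ℤ) + k).toNat).map (Int.cast : ℤ → ℚ) := by
    rw [← Int.toNat_of_nonneg hknn, zpow_natCast]
    have h : M.map (Int.cast : ℤ → ℚ) = (Int.castRingHom ℚ).mapMatrix M := rfl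
    rw [h, ← map_pow]
    rfl
  rw [hpow]
  have := RingHom.map_mulVec (Int.castRingHom ℚ) (M ^ ((N' : ℤ) + k).toNat) (c k) i
  simpa [Function.comp_def] using this.symm

end aux

theorem stmt_9 {m : ℕ} (M : Matrix (Fin m) (Fin m) ℤ) (hM : M.det ≠ 0)
    (D : Set (Fin m → ℤ)) (hD : D.Finite) (h0 : (0 : Fin m → ℤ) ∈ D)
    (hZ : ∀ z : Fin m → ℤ, (fun i => (z i : ℚ)) ∈ FinD M D) :
    ∀ x ∈ FinD M D, ∀ y ∈ FinD M D, x + y ∈ FinD M D ∧ x - y ∈ FinD M D := by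
  intro x hx y hy
  set A := M.map (Int.cast : ℤ → ℚ) with hA
  have hdet := det_cast M hM
  obtain ⟨N1, h1⟩ := finD_int M D hM hx
  obtain ⟨N2, h2⟩ := finD_int M D hM hy
  obtain ⟨z1, hz1⟩ := h1 (max N1 N2) (le_max_left _ _)
  obtain ⟨z2, hz2⟩ := h2 (max N1 N2) (le_max_right _ _)
  set N : ℤ := ((max N1 N2 : ℕ) : ℤ) with hN
  have hrec : ∀ v : Fin m → ℚ, (A ^ (-N)).mulVec ((A ^ N).mulVec v) = v := by
    intro v
    rw [Matrix.mulVec_mulVec, Matrix.zpow_neg_mul_zpow_self _ hdet, Matrix.one_mulVec]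
  constructor
  · have key : x + y = (A ^ (-N)).mulVec (fun i => ((z1 i + z2 i : ℤ) : ℚ)) := by
      have h : (fun i => ((z1 i + z2 i : ℤ) : ℚ))
          = (A ^ N).mulVec x + (A ^ N).mulVec y := by
        rw [hz1, hz2]; funext i; push_cast; simp
      rw [h, Matrix.mulVec_add, hrec x, hrec y]
    rw [key]
    exact finD_shift M D hM (-N) (hZ _)
  · have key : x - y = (A ^ (-N)).mulVec (fun i => ((z1 i - z2 i : ℤ) : ℚ)) := by
      have h : (fun i => ((z1 i - z2 i : ℤ) : ℚ))
          = (A ^ N).mulVec x - (A ^ N).mulVec y := by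
        rw [hz1, hz2]; funext i; push_cast; simp
      rw [h, Matrix.mulVec_sub, hrec x, hrec y]
    rw [key]
    exact finD_shift M D hM (-N) (hZ _)
end

section
/- Let M ∈ ℤ^{m×m} with det M ≠ 0 and let D ⊂ ℤ^m be a finite set containing 0 such that ℤ^m ⊆ Fin_D(M). Then Fin_D(M) = ⋃_{n∈ℤ} M^n ℤ^m. -/
lemma pow_map_cast {m : ℕ} (M : Matrix (Fin m) (Fin m) ℤ) (t : ℕ) :
    (M.map (Int.cast : ℤ → ℚ)) ^ t = (M ^ t).map (Int.cast : ℤ → ℚ) := by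
  have : M.map (Int.cast : ℤ → ℚ) = (Int.castRingHom ℚ).mapMatrix M := rfl
  rw [this, ← map_pow]; rfl

lemma cast_mulVec {m : ℕ} (N : Matrix (Fin m) (Fin m) ℤ) (v : Fin m → ℤ) :
    (N.map (Int.cast : ℤ → ℚ)).mulVec (fun i => (v i : ℚ))
      = fun i => ((N.mulVec v) i : ℚ) := by
  funext i
  simp only [Matrix.mulVec, dotProduct, Matrix.map_apply]
  push_cast
  rfl

theorem stmt_10 {m : ℕ} (M : Matrix (Fin m) (Fin m) ℤ) (hM : M.det ≠ 0)
    (D : Set (Fin m → ℤ)) (hD : D.Finite) (h0 : (0 : Fin m → ℤ) ∈ D)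
    (hZ : ∀ z : Fin m → ℤ, (fun i => (z i : ℚ)) ∈ FinD M D) :
    FinD M D = {x | ∃ (n : ℤ) (v : Fin m → ℤ),
      x = ((M.map (Int.cast : ℤ → ℚ)) ^ n).mulVec (fun i => (v i : ℚ))} := by
  set A := M.map (Int.cast : ℤ → ℚ) with hA
  have hdet : IsUnit A.det := by
    have : A.det = ((M.det : ℤ) : ℚ) := ((Int.castRingHom ℚ).map_det M).symm
    rw [this]
    exact isUnit_iff_ne_zero.2 (by exact_mod_cast hM)
  ext x
  constructor
  · rintro ⟨I, hI, c, hc, rfl⟩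
    set n := I.min' hI with hn
    refine ⟨n, ∑ k ∈ I, (M ^ (k - n).toNat).mulVec (c k), ?_⟩
    have : ∀ k ∈ I, (A ^ k).mulVec (fun i => (c k i : ℚ))
        = (A ^ n).mulVec (fun i => (((M ^ (k - n).toNat).mulVec (c k)) i : ℚ)) := by
      intro k hk
      have hkn : n ≤ k := I.min'_le k hk
      have h1 : A ^ k = A ^ n * A ^ ((k - n).toNat : ℕ) := by
        rw [← zpow_natCast A, ← Matrix.zpow_add hdet,
          Int.toNat_of_nonneg (sub_nonneg.2 hkn)]
        ring_nf
      rw [h1, ← Matrix.mulVec_mulVec, pow_map_cast, cast_mulVec]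
    rw [Finset.sum_congr rfl this, ← Matrix.mulVecLin_apply]
    rw [show (fun i => ((∑ k ∈ I, (M ^ (k - n).toNat).mulVec (c k)) i : ℚ))
        = ∑ k ∈ I, (fun i => (((M ^ (k - n).toNat).mulVec (c k)) i : ℚ)) by
      funext i; push_cast [Finset.sum_apply]; rfl]
    rw [map_sum]
    simp [Matrix.mulVecLin_apply]
  · rintro ⟨n, v, rfl⟩
    obtain ⟨I, hI, c, hc, hv⟩ := hZ v
    refine ⟨I.map ⟨(· + n), add_left_injective n⟩, hI.map, fun k => c (k - n), ?_, ?_⟩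
    · intro k hk
      simp only [Finset.mem_map, Function.Embedding.coeFn_mk] at hk
      obtain ⟨a, ha, rfl⟩ := hk
      simpa using hc a ha
    · rw [Finset.sum_map, hv]
      simp only [Function.Embedding.coeFn_mk, add_sub_cancel_right]
      rw [← Matrix.mulVecLin_apply, map_sum]
      refine Finset.sum_congr rfl fun k hk => ?_
      rw [Matrix.mulVecLin_apply, Matrix.mulVec_mulVec, ← Matrix.zpow_add hdet]
      ring_nf
      rfl
end

section
/- Let M ∈ ℤ^{m×m} with det M = Δ ≠ 0 and D ⊂ ℤ^m finite with 0 ∈ D and ℤ^m ⊆ Fin_D(M). Then Fin_D(M) = ⋃_{k∈ℕ} (1/Δ^k)ℤ^m if and only if for each i ∈ {1,…,m} there exists ℓ_i ∈ ℕ such that (1/Δ)e_i ∈ M^{-ℓ_i}(ℤ^m), where e_i is the i-th standard basis vector. -/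
open Matrix

namespace Stmt11Aux

variable {m : ℕ}

noncomputable abbrev Q (M : Matrix (Fin m) (Fin m) ℤ) : Matrix (Fin m) (Fin m) ℚ :=
  M.map (Int.cast : ℤ → ℚ)

def cV (v : Fin m → ℤ) : Fin m → ℚ := fun i => (v i : ℚ)

lemma Q_eq (M : Matrix (Fin m) (Fin m) ℤ) :
    Q M = (Int.castRingHom ℚ).mapMatrix M := rfl

lemma detQ (M : Matrix (Fin m) (Fin m) ℤ) : (Q M).det = (M.det : ℚ) := by
  rw [Q_eq, ← RingHom.map_det]; rfl

lemma hdetQ (M : Matrix (Fin m) (Fin m) ℤ) (hM : M.det ≠ 0) : IsUnit (Q M).det := by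
  rw [detQ]; exact isUnit_iff_ne_zero.mpr (by exact_mod_cast hM)

lemma Q_pow (M : Matrix (Fin m) (Fin m) ℤ) (n : ℕ) :
    (M ^ n).map (Int.cast : ℤ → ℚ) = Q M ^ n := by
  simp only [Q_eq, ← RingHom.mapMatrix_apply, map_pow]

lemma cV_mulVec (A : Matrix (Fin m) (Fin m) ℤ) (v : Fin m → ℤ) :
    cV (A.mulVec v) = (A.map (Int.cast : ℤ → ℚ)).mulVec (cV v) := by
  funext i
  simp [cV, Matrix.mulVec, dotProduct, Matrix.map_apply]

lemma cV_sum {α : Type*} (s : Finset α) (f : α → Fin m → ℤ) :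
    cV (∑ k ∈ s, f k) = ∑ k ∈ s, cV (f k) := by
  funext i
  simp [cV, Finset.sum_apply]

lemma cV_zsmul (a : ℤ) (v : Fin m → ℤ) : cV (a • v) = (a : ℚ) • cV v := by
  funext i; simp [cV]

lemma mulVec_sum {α : Type*} (A : Matrix (Fin m) (Fin m) ℚ) (s : Finset α)
    (f : α → Fin m → ℚ) : A.mulVec (∑ k ∈ s, f k) = ∑ k ∈ s, A.mulVec (f k) := by
  rw [show A.mulVec (∑ k ∈ s, f k) = A.mulVecLin (∑ k ∈ s, f k) from rfl, map_sum]; rfl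

lemma finD_eq (M : Matrix (Fin m) (Fin m) ℤ) (D : Set (Fin m → ℤ)) :
    FinD M D = {x | ∃ I : Finset ℤ, I.Nonempty ∧ ∃ c : ℤ → (Fin m → ℤ), (∀ k ∈ I, c k ∈ D) ∧
      x = ∑ k ∈ I, (Q M ^ k).mulVec (cV (c k))} := rfl

lemma shift_mem (M : Matrix (Fin m) (Fin m) ℤ) (hM : M.det ≠ 0)
    (D : Set (Fin m → ℤ)) {x : Fin m → ℚ} (hx : x ∈ FinD M D) (n : ℤ) :
    (Q M ^ n).mulVec x ∈ FinD M D := by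
  rw [finD_eq] at hx ⊢
  obtain ⟨I, hne, c, hc, rfl⟩ := hx
  refine ⟨I.map (addLeftEmbedding n), hne.map, fun k => c (k - n), ?_, ?_⟩
  · intro k hk
    simp only [Finset.mem_map, addLeftEmbedding_apply] at hk
    obtain ⟨a, ha, rfl⟩ := hk
    simpa using hc a ha
  · rw [Finset.sum_map, mulVec_sum]
    refine Finset.sum_congr rfl fun a _ => ?_
    simp only [addLeftEmbedding_apply, add_sub_cancel_left, Matrix.mulVec_mulVec,
      ← Matrix.zpow_add (hdetQ M hM)]

lemma core (M : Matrix (Fin m) (Fin m) ℤ) (hM : M.det ≠ 0)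
    (D : Set (Fin m → ℤ)) {x : Fin m → ℚ} (hx : x ∈ FinD M D) :
    ∃ (N : ℕ) (w : Fin m → ℤ), x = (Q M ^ (-(N : ℤ))).mulVec (cV w) := by
  rw [finD_eq] at hx
  obtain ⟨I, hne, c, hc, rfl⟩ := hx
  set N : ℕ := (I.inf' hne id).natAbs with hN
  have hNk : ∀ k ∈ I, (0 : ℤ) ≤ k + N := by
    intro k hk
    have h1 : I.inf' hne id ≤ k := Finset.inf'_le id hk
    have h2 : -(N : ℤ) ≤ I.inf' hne id := by rw [hN]; omega
    omega
  refine ⟨N, ∑ k ∈ I, (M ^ (k + N).toNat).mulVec (c k), ?_⟩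
  have key : (Q M ^ (N : ℤ)).mulVec (∑ k ∈ I, (Q M ^ k).mulVec (cV (c k)))
      = cV (∑ k ∈ I, (M ^ (k + N).toNat).mulVec (c k)) := by
    rw [mulVec_sum, cV_sum]
    refine Finset.sum_congr rfl fun k hk => ?_
    rw [cV_mulVec, Q_pow, Matrix.mulVec_mulVec, ← zpow_natCast (Q M) ((k + N).toNat),
      Int.toNat_of_nonneg (hNk k hk), ← Matrix.zpow_add (hdetQ M hM), add_comm]
  rw [← key, Matrix.mulVec_mulVec, ← Matrix.zpow_add (hdetQ M hM), neg_add_cancel,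
    zpow_zero, Matrix.one_mulVec]

lemma negpow_eq (M : Matrix (Fin m) (Fin m) ℤ) (hM : M.det ≠ 0) (N : ℕ) (w : Fin m → ℤ) :
    (Q M ^ (-(N : ℤ))).mulVec (cV w)
      = fun i => (((M.adjugate ^ N).mulVec w) i : ℚ) / (M.det : ℚ) ^ N := by
  have h1 : Q M ^ (-(N : ℤ)) = ((M.det : ℚ) ^ N)⁻¹ • ((M.adjugate ^ N).map (Int.cast : ℤ → ℚ)) := by
    rw [Matrix.zpow_neg (hdetQ M hM), zpow_natCast, ← Matrix.inv_pow',
      Matrix.inv_def, detQ, Ring.inverse_eq_inv, smul_pow, inv_pow]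
    congr 1
    rw [show ((M.adjugate ^ N).map (Int.cast : ℤ → ℚ))
        = (Int.castRingHom ℚ).mapMatrix (M.adjugate ^ N) from rfl,
      map_pow, (Int.castRingHom ℚ).map_adjugate M]
    rfl
  rw [h1, Matrix.smul_mulVec, ← cV_mulVec]
  funext i
  simp only [Pi.smul_apply, cV, smul_eq_mul]
  rw [div_eq_inv_mul]

lemma memS (M : Matrix (Fin m) (Fin m) ℤ) (hM : M.det ≠ 0)
    (D : Set (Fin m → ℤ))
    (hZ : ∀ z : Fin m → ℤ, (fun i => (z i : ℚ)) ∈ FinD M D)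
    (hyp : ∀ i : Fin m, ∃ (ℓ : ℕ) (v : Fin m → ℤ),
        (fun j => (if j = i then (1 : ℚ) else 0) / (M.det : ℚ)) =
          (Q M ^ (-(ℓ : ℤ))).mulVec (cV v)) :
    ∀ (k : ℕ) (v : Fin m → ℤ),
      (fun i => (v i : ℚ) / (M.det : ℚ) ^ k) ∈ FinD M D := by
  intro k
  induction k with
  | zero => intro v; simpa using hZ v
  | succ k ih =>
    intro v
    choose ℓ w hw using hyp
    set L : ℕ := Finset.univ.sup ℓ with hL
    set u : Fin m → ℤ := ∑ i : Fin m, v i • (M ^ (L - ℓ i)).mulVec (w i) with hu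
    have hmem : (Q M ^ (-(L : ℤ))).mulVec (fun j => (u j : ℚ) / (M.det : ℚ) ^ k) ∈ FinD M D :=
      shift_mem M hM D (ih u) _
    have heq : (Q M ^ (-(L : ℤ))).mulVec (fun j => (u j : ℚ) / (M.det : ℚ) ^ k)
        = fun i => (v i : ℚ) / (M.det : ℚ) ^ (k + 1) := by
      have hsplit : (fun j => (u j : ℚ) / (M.det : ℚ) ^ k)
          = ((M.det : ℚ) ^ k)⁻¹ • cV u := by
        funext j; simp [cV, div_eq_inv_mul]
      rw [hsplit, Matrix.mulVec_smul]
      have hcu : cV u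
          = ∑ i : Fin m, (v i : ℚ) • (Q M ^ ((L - ℓ i : ℕ) : ℤ)).mulVec (cV (w i)) := by
        rw [hu, cV_sum]
        refine Finset.sum_congr rfl fun i _ => ?_
        rw [cV_zsmul, cV_mulVec, Q_pow, ← zpow_natCast (Q M)]
      rw [hcu, mulVec_sum]
      have hterm : ∀ i : Fin m,
          (Q M ^ (-(L : ℤ))).mulVec ((v i : ℚ) • (Q M ^ ((L - ℓ i : ℕ) : ℤ)).mulVec (cV (w i)))
          = (v i : ℚ) • (fun j' => (if j' = i then (1 : ℚ) else 0) / (M.det : ℚ)) := by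
        intro i
        rw [Matrix.mulVec_smul, Matrix.mulVec_mulVec, ← Matrix.zpow_add (hdetQ M hM)]
        have hle : ℓ i ≤ L := Finset.le_sup (Finset.mem_univ i)
        have harith : (-(L : ℤ)) + ((L - ℓ i : ℕ) : ℤ) = -((ℓ i : ℕ) : ℤ) := by omega
        rw [harith, ← hw i]
      simp only [hterm]
      funext j
      simp only [Pi.smul_apply, Finset.sum_apply, smul_eq_mul]
      rw [Finset.sum_congr rfl (fun i _ => show
          (v i : ℚ) * ((if j = i then (1 : ℚ) else 0) / (M.det : ℚ))
            = if j = i then (v i : ℚ) / (M.det : ℚ) else 0 by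
        split <;> simp [div_eq_mul_inv])]
      rw [Finset.sum_ite_eq]
      simp only [Finset.mem_univ, if_true]
      rw [pow_succ]
      field_simp
    rwa [heq] at hmem

end Stmt11Aux

theorem stmt_11 {m : ℕ} (M : Matrix (Fin m) (Fin m) ℤ) (hM : M.det ≠ 0)
    (D : Set (Fin m → ℤ)) (hD : D.Finite) (h0 : (0 : Fin m → ℤ) ∈ D)
    (hZ : ∀ z : Fin m → ℤ, (fun i => (z i : ℚ)) ∈ FinD M D) :
    FinD M D = {x | ∃ (k : ℕ) (v : Fin m → ℤ), x = fun i => (v i : ℚ) / (M.det : ℚ) ^ k} ↔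
      ∀ i : Fin m, ∃ (ℓ : ℕ) (v : Fin m → ℤ),
        (fun j => (if j = i then (1 : ℚ) else 0) / (M.det : ℚ)) =
          ((M.map (Int.cast : ℤ → ℚ)) ^ (-(ℓ : ℤ))).mulVec (fun j => (v j : ℚ)) := by
  constructor
  · intro h i
    have hmem : (fun j => (if j = i then (1 : ℚ) else 0) / (M.det : ℚ)) ∈ FinD M D := by
      rw [h]
      refine ⟨1, fun j => if j = i then 1 else 0, ?_⟩
      funext j
      rw [pow_one]
      by_cases hji : j = i <;> simp [hji]
    obtain ⟨N, w, hx⟩ := Stmt11Aux.core M hM D hmem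
    exact ⟨N, w, hx⟩
  · intro hyp
    ext x
    constructor
    · intro hx
      obtain ⟨N, w, rfl⟩ := Stmt11Aux.core M hM D hx
      exact ⟨N, (M.adjugate ^ N).mulVec w, Stmt11Aux.negpow_eq M hM N w⟩
    · rintro ⟨k, v, rfl⟩
      exact Stmt11Aux.memS M hM D hZ hyp k v
end

section
/- Let M ∈ ℤ^{m×m}, det M = Δ ≠ 0, and let D ⊂ ℤ^m be a finite digit set with 0 ∈ D such that ℤ^m ⊆ Fin_D(M). Then Fin_D(M) = ⋃_{k∈ℕ} (1/Δ^k)ℤ^m if and only if there exists ℓ ∈ ℕ such that M^ℓ ≡ 0 (mod Δ) entrywise. -/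
open Matrix

namespace Stmt12Aux

variable {m : ℕ}

def castV (v : Fin m → ℤ) : Fin m → ℚ := fun i => (v i : ℚ)

lemma castV_sum (I : Finset ℤ) (w : ℤ → Fin m → ℤ) :
    castV (∑ k ∈ I, w k) = ∑ k ∈ I, castV (w k) := by
  ext i
  simp [castV, Finset.sum_apply]

lemma detA (M : Matrix (Fin m) (Fin m) ℤ) :
    (M.map (Int.cast : ℤ → ℚ)).det = (M.det : ℚ) := by
  rw [show M.map (Int.cast : ℤ → ℚ) = (Int.castRingHom ℚ).mapMatrix M from rfl,
    ← RingHom.map_det]; rfl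

lemma isUnit_detA (M : Matrix (Fin m) (Fin m) ℤ) (hM : M.det ≠ 0) :
    IsUnit (M.map (Int.cast : ℤ → ℚ)).det := by
  rw [detA]; exact isUnit_iff_ne_zero.2 (by exact_mod_cast hM)

lemma pow_map (M : Matrix (Fin m) (Fin m) ℤ) (n : ℕ) :
    (M.map (Int.cast : ℤ → ℚ)) ^ n = (M ^ n).map (Int.cast : ℤ → ℚ) := by
  rw [show M.map (Int.cast : ℤ → ℚ) = (Int.castRingHom ℚ).mapMatrix M from rfl, ← _root_.map_pow]
  rfl

lemma mulVec_castV (N : Matrix (Fin m) (Fin m) ℤ) (v : Fin m → ℤ) :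
    (N.map (Int.cast : ℤ → ℚ)) *ᵥ castV v = castV (N *ᵥ v) := by
  ext i
  exact (RingHom.map_mulVec (Int.castRingHom ℚ) N v i).symm

lemma smul_map (N : Matrix (Fin m) (Fin m) ℤ) (a : ℤ) :
    ((a • N).map (Int.cast : ℤ → ℚ)) = (a : ℚ) • N.map (Int.cast : ℤ → ℚ) := by
  ext i j
  rw [Matrix.map_apply, Matrix.smul_apply, Matrix.smul_apply, Matrix.map_apply,
    smul_eq_mul, smul_eq_mul]
  push_cast
  ring

/-- Key identity: `A^k = Δ^{-n} • (integer matrix)` whenever `k + n ≥ 0`. -/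
lemma zpow_eq (M : Matrix (Fin m) (Fin m) ℤ) (hM : M.det ≠ 0) (k : ℤ) (n : ℕ)
    (h : 0 ≤ k + n) :
    (M.map (Int.cast : ℤ → ℚ)) ^ k
      = ((M.det : ℚ) ^ n)⁻¹ • ((M ^ (k + n).toNat * (adjugate M) ^ n).map (Int.cast : ℤ → ℚ)) := by
  set A := M.map (Int.cast : ℤ → ℚ) with hA
  have hu : IsUnit A.det := isUnit_detA M hM
  have hmap : (M ^ (k + n).toNat * (adjugate M) ^ n).map (Int.cast : ℤ → ℚ)
      = A ^ (k + n).toNat * (adjugate A) ^ n := by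
    rw [hA, show M.map (Int.cast : ℤ → ℚ) = (Int.castRingHom ℚ).mapMatrix M from rfl]
    rw [show (M ^ (k + n).toNat * (adjugate M) ^ n).map (Int.cast : ℤ → ℚ)
      = (Int.castRingHom ℚ).mapMatrix (M ^ (k + n).toNat * (adjugate M) ^ n) from rfl]
    rw [_root_.map_mul, _root_.map_pow, _root_.map_pow, RingHom.map_adjugate]
  have hcomm : Commute A (adjugate A) := by
    unfold Commute SemiconjBy
    rw [Matrix.mul_adjugate, Matrix.adjugate_mul]
  have h1 : (A ^ (k + n).toNat : Matrix (Fin m) (Fin m) ℚ) = A ^ (k + n) := by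
    rw [← zpow_natCast, Int.toNat_of_nonneg h]
  have h2 : A ^ (k + n) = A ^ k * A ^ (n : ℤ) := Matrix.zpow_add hu k n
  have h3 : (A ^ (n : ℤ) : Matrix (Fin m) (Fin m) ℚ) = A ^ n := zpow_natCast A n
  have h4 : A ^ n * (adjugate A) ^ n = (A.det) ^ n • 1 := by
    rw [← hcomm.mul_pow, Matrix.mul_adjugate, smul_pow, one_pow]
  have hΔ : ((M.det : ℚ) ^ n) ≠ 0 := pow_ne_zero _ (by exact_mod_cast hM)
  rw [hmap, h1, h2, h3, mul_assoc, h4, detA, mul_smul_one, inv_smul_smul₀ hΔ]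

/-- Each term `A^k d` lies in `Δ^{-n} ℤ^m`. -/
lemma term_eq (M : Matrix (Fin m) (Fin m) ℤ) (hM : M.det ≠ 0) (k : ℤ) (n : ℕ)
    (h : 0 ≤ k + n) (c : Fin m → ℤ) :
    ((M.map (Int.cast : ℤ → ℚ)) ^ k) *ᵥ castV c
      = fun i => ((((M ^ (k + n).toNat * (adjugate M) ^ n) *ᵥ c) i : ℚ) / (M.det : ℚ) ^ n) := by
  rw [zpow_eq M hM k n h, Matrix.smul_mulVec, mulVec_castV]
  ext i
  simp [castV, div_eq_inv_mul]

lemma mulVec_finset_sum (A : Matrix (Fin m) (Fin m) ℚ) (I : Finset ℤ) (f : ℤ → Fin m → ℚ) :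
    A *ᵥ (∑ k ∈ I, f k) = ∑ k ∈ I, A *ᵥ f k :=
  map_sum A.mulVecLin f I

end Stmt12Aux

namespace Stmt12Aux

/-- `FinD` is closed under multiplication by any integer power of `M`. -/
lemma shift_mem {m : ℕ} (M : Matrix (Fin m) (Fin m) ℤ) (hM : M.det ≠ 0) (D : Set (Fin m → ℤ))
    {x : Fin m → ℚ} (hx : x ∈ FinD M D) (j : ℤ) :
    ((M.map (Int.cast : ℤ → ℚ)) ^ j) *ᵥ x ∈ FinD M D := by
  set A := M.map (Int.cast : ℤ → ℚ) with hA
  have hu : IsUnit A.det := isUnit_detA M hM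
  obtain ⟨I, hne, c, hc, rfl⟩ := hx
  refine ⟨I.image (· + j), hne.image _, fun k => c (k - j), ?_, ?_⟩
  · intro k hk
    obtain ⟨k0, hk0, rfl⟩ := Finset.mem_image.1 hk
    simpa using hc k0 hk0
  · rw [mulVec_finset_sum]
    rw [Finset.sum_image (fun a _ b _ h => by omega)]
    refine Finset.sum_congr rfl fun k hk => ?_
    rw [Matrix.mulVec_mulVec, ← Matrix.zpow_add hu, add_comm j k]
    simp [hA]

end Stmt12Aux

theorem stmt_12 {m : ℕ} (M : Matrix (Fin m) (Fin m) ℤ) (hM : M.det ≠ 0)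
    (D : Set (Fin m → ℤ)) (hD : D.Finite) (h0 : (0 : Fin m → ℤ) ∈ D)
    (hZ : ∀ z : Fin m → ℤ, (fun i => (z i : ℚ)) ∈ FinD M D) :
    FinD M D = {x | ∃ (k : ℕ) (v : Fin m → ℤ), x = fun i => (v i : ℚ) / (M.det : ℚ) ^ k} ↔
      ∃ ℓ : ℕ, ∀ i j : Fin m, M.det ∣ (M ^ ℓ) i j := by
  classical
  set A := M.map (Int.cast : ℤ → ℚ) with hA
  have hu : IsUnit A.det := Stmt12Aux.isUnit_detA M hM
  have hΔQ : ((M.det : ℚ)) ≠ 0 := by exact_mod_cast hM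
  constructor
  · -- forward direction
    intro heq
    have key : ∀ j : Fin m, ∃ n : ℕ, ∀ i, M.det ∣ (M ^ n) i j := by
      intro j
      have hxj : (fun i => ((Pi.single j 1 : Fin m → ℤ) i : ℚ) / (M.det : ℚ) ^ 1) ∈ FinD M D := by
        rw [heq]; exact ⟨1, Pi.single j 1, rfl⟩
      obtain ⟨I, hne, c, hc, hx⟩ := hxj
      set n : ℕ := (-(I.min' hne)).toNat with hn
      have hkn : ∀ k ∈ I, 0 ≤ k + (n : ℤ) := by
        intro k hk
        have h1 : I.min' hne ≤ k := I.min'_le k hk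
        have h2 := Int.self_le_toNat (-(I.min' hne))
        omega
      refine ⟨n, fun i => ?_⟩
      -- compute A^n *ᵥ x two ways
      have way1 : (A ^ (n : ℤ)) *ᵥ (fun i => ((Pi.single j 1 : Fin m → ℤ) i : ℚ) / (M.det : ℚ) ^ 1)
          = Stmt12Aux.castV (∑ k ∈ I, (M ^ (k + n).toNat) *ᵥ (c k)) := by
        rw [hx, Stmt12Aux.mulVec_finset_sum, Stmt12Aux.castV_sum]
        refine Finset.sum_congr rfl fun k hk => ?_
        rw [Matrix.mulVec_mulVec, ← Matrix.zpow_add hu,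
          show (n : ℤ) + k = ((k + n).toNat : ℤ) by rw [Int.toNat_of_nonneg (hkn k hk)]; ring,
          zpow_natCast, Stmt12Aux.pow_map]
        exact Stmt12Aux.mulVec_castV _ _
      have way2 : (A ^ (n : ℤ)) *ᵥ (fun i => ((Pi.single j 1 : Fin m → ℤ) i : ℚ) / (M.det : ℚ) ^ 1)
          = ((M.det : ℚ))⁻¹ • Stmt12Aux.castV (fun i => (M ^ n) i j) := by
        have hx2 : (fun i => ((Pi.single j 1 : Fin m → ℤ) i : ℚ) / (M.det : ℚ) ^ 1)
            = ((M.det : ℚ))⁻¹ • Stmt12Aux.castV (Pi.single j 1) := by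
          ext i; simp [Stmt12Aux.castV, div_eq_inv_mul]
        rw [hx2, Matrix.mulVec_smul, zpow_natCast, Stmt12Aux.pow_map, Stmt12Aux.mulVec_castV]
        congr 1
        congr 1
        rw [Matrix.mulVec_single]
        ext i; simp
      have heq2 := way1.symm.trans way2
      have hW := congrFun heq2 i
      simp only [Stmt12Aux.castV, Pi.smul_apply, smul_eq_mul] at hW
      have heq3 : (M.det : ℚ) * (((∑ k ∈ I, (M ^ (k + n).toNat) *ᵥ (c k)) i : ℤ) : ℚ)
          = (((M ^ n) i j : ℤ) : ℚ) := by
        rw [hW, mul_inv_cancel_left₀ hΔQ]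
      have heq4 : (M ^ n) i j = M.det * (∑ k ∈ I, (M ^ (k + n).toNat) *ᵥ (c k)) i := by
        exact_mod_cast heq3.symm
      exact ⟨_, heq4⟩
    choose n hn using key
    refine ⟨Finset.univ.sup n, fun i j => ?_⟩
    have hle : n j ≤ Finset.univ.sup n := Finset.le_sup (Finset.mem_univ j)
    have hpow : M ^ Finset.univ.sup n = M ^ (Finset.univ.sup n - n j) * M ^ (n j) := by
      rw [← pow_add, Nat.sub_add_cancel hle]
    rw [hpow, Matrix.mul_apply]
    exact Finset.dvd_sum fun t _ => Dvd.dvd.mul_left (hn j t) _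
  · -- backward direction
    rintro ⟨ℓ, hdvd⟩
    ext x
    simp only [Set.mem_setOf_eq]
    constructor
    · rintro ⟨I, hne, c, hc, rfl⟩
      set n : ℕ := (-(I.min' hne)).toNat with hn
      have hkn : ∀ k ∈ I, 0 ≤ k + (n : ℤ) := by
        intro k hk
        have h1 : I.min' hne ≤ k := I.min'_le k hk
        have h2 := Int.self_le_toNat (-(I.min' hne))
        omega
      refine ⟨n, fun i => ∑ k ∈ I, ((M ^ (k + n).toNat * (adjugate M) ^ n) *ᵥ (c k)) i, ?_⟩
      ext i
      rw [Finset.sum_apply]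
      have hterm : ∀ k ∈ I,
          (((M.map (Int.cast : ℤ → ℚ)) ^ k) *ᵥ fun i => ((c k i : ℚ))) i
            = ((((M ^ (k + n).toNat * (adjugate M) ^ n) *ᵥ (c k)) i : ℚ) / (M.det : ℚ) ^ n) :=
        fun k hk => congrFun (Stmt12Aux.term_eq M hM k n (hkn k hk) (c k)) i
      rw [Finset.sum_congr rfl hterm, ← Finset.sum_div]
      push_cast
      rfl
    · rintro ⟨k, v, rfl⟩
      have h' : ∀ i j, ∃ a, (M ^ ℓ) i j = M.det * a := fun i j => hdvd i j
      choose N hN using h'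
      have hMN : M ^ ℓ = M.det • (Matrix.of N) := by
        ext i j; simp [hN i j]
      have hmem := hZ (((Matrix.of N) ^ k) *ᵥ v)
      have hmem2 := Stmt12Aux.shift_mem M hM D hmem (-((ℓ * k : ℕ) : ℤ))
      have hAx : A ^ (((ℓ * k : ℕ) : ℤ)) *ᵥ (fun i => (v i : ℚ) / (M.det : ℚ) ^ k)
          = Stmt12Aux.castV (((Matrix.of N) ^ k) *ᵥ v) := by
        have hx2 : (fun i => (v i : ℚ) / (M.det : ℚ) ^ k)
            = ((M.det : ℚ) ^ k)⁻¹ • Stmt12Aux.castV v := by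
          ext i; simp [Stmt12Aux.castV, div_eq_inv_mul]
        rw [hx2, Matrix.mulVec_smul, zpow_natCast, Stmt12Aux.pow_map, pow_mul, hMN,
          smul_pow, Stmt12Aux.smul_map, Matrix.smul_mulVec, Stmt12Aux.mulVec_castV]
        push_cast
        rw [inv_smul_smul₀ (pow_ne_zero _ (show (M.map fun x => (x : ℚ)).det ≠ 0 from by
          rw [show (M.map fun x => (x : ℚ)) = M.map (Int.cast : ℤ → ℚ) from rfl, Stmt12Aux.detA]
          exact hΔQ))]
      have hfinal : (A ^ (-((ℓ * k : ℕ) : ℤ))) *ᵥ Stmt12Aux.castV (((Matrix.of N) ^ k) *ᵥ v)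
          = fun i => (v i : ℚ) / (M.det : ℚ) ^ k := by
        rw [← hAx, Matrix.mulVec_mulVec, ← Matrix.zpow_add hu, neg_add_cancel, zpow_zero,
          Matrix.one_mulVec]
      rw [← hfinal]
      exact hmem2
end
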